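/- Let A, B be finite nonempty subsets of an abelian group and suppose 𝔄(A,B) = τ·|A+B| for some real τ ∈ [0,1]. Then |A|·|B| ≥ 2^{1−τ}·|A+B|. -/

import Mathlib

open scoped Pointwise

variable {G : Type*} [AddCommGroup G] [DecidableEq G]

def repCount (A B : Finset G) (x : G) : ℕ :=
  ((A ×ˢ B).filter fun ab => ab.1 + ab.2 = x).card

def uniqueRep (A B : Finset G) : ℕ :=
  ((A + B).filter fun x => repCount A B x = 1).card

def addEnergy' (A B : Finset G) : ℕ :=
  (((A ×ˢ A) ×ˢ B ×ˢ B).filter fun t => t.1.1 + t.2.1 = t.1.2 + t.2.2).card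

set_option maxHeartbeats 1000000 in
lemma sum_repCount (A B : Finset G) :
    ∑ x ∈ A + B, repCount A B x = A.card * B.card := by
  rw [← Finset.card_product]
  apply (Finset.card_eq_sum_card_fiberwise
    (f := fun ab : G × G => ab.1 + ab.2) (t := A + B) ?_).symm
  intro ab hab
  rw [Finset.mem_coe, Finset.mem_product] at hab
  exact Finset.add_mem_add hab.1 hab.2

lemma repCount_pos {A B : Finset G} {x : G} (hx : x ∈ A + B) :
    1 ≤ repCount A B x := by
  rw [Finset.mem_add] at hx
  obtain ⟨a, ha, b, hb, rfl⟩ := hx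
  refine Finset.card_pos.mpr ⟨(a, b), ?_⟩
  simp [Finset.mem_filter, Finset.mem_product, ha, hb]

lemma two_rpow_le (τ : ℝ) (hτ0 : 0 ≤ τ) (hτ1 : τ ≤ 1) :
    (2 : ℝ) ^ (1 - τ) ≤ 2 - τ := by
  have h := convexOn_exp.2 (Set.mem_univ (0 : ℝ)) (Set.mem_univ (Real.log 2))
    hτ0 (by linarith : (0:ℝ) ≤ 1 - τ) (by ring)
  simp only [smul_eq_mul, mul_zero, zero_add, Real.exp_zero, mul_one,
    Real.exp_log (by norm_num : (0:ℝ) < 2)] at h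
  have : (2 : ℝ) ^ (1 - τ) = Real.exp ((1 - τ) * Real.log 2) := by
    rw [Real.rpow_def_of_pos (by norm_num), mul_comm]
  rw [this]
  linarith

theorem stmt_10 (A B : Finset G) (hA : A.Nonempty) (hB : B.Nonempty)
    (τ : ℝ) (hτ0 : 0 ≤ τ) (hτ1 : τ ≤ 1)
    (hτ : (uniqueRep A B : ℝ) = τ * (A + B).card) :
    (A.card : ℝ) * B.card ≥ (2 : ℝ) ^ (1 - τ) * (A + B).card := by
  set S := A + B with hS
  set n := S.card with hn
  set u := uniqueRep A B with hu
  have hsplit : u + (S.filter fun x => ¬ repCount A B x = 1).card = n := by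
    rw [hu, uniqueRep, ← hS]
    exact Finset.card_filter_add_card_filter_not _
  have hsum : A.card * B.card ≥ u + 2 * (S.filter fun x => ¬ repCount A B x = 1).card := by
    rw [← sum_repCount A B, ← hS,
      ← Finset.sum_filter_add_sum_filter_not S (fun x => repCount A B x = 1)]
    have h1 : u ≤ ∑ x ∈ S.filter (fun x => repCount A B x = 1), repCount A B x := by
      rw [hu, uniqueRep, ← hS]
      calc (S.filter fun x => repCount A B x = 1).card
          = ∑ _x ∈ S.filter (fun x => repCount A B x = 1), 1 := by simp
        _ ≤ _ := Finset.sum_le_sum (fun x hx =>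
            repCount_pos (Finset.mem_filter.mp hx).1)
    have h2 : 2 * (S.filter fun x => ¬ repCount A B x = 1).card
        ≤ ∑ x ∈ S.filter (fun x => ¬ repCount A B x = 1), repCount A B x := by
      calc 2 * (S.filter fun x => ¬ repCount A B x = 1).card
          = ∑ _x ∈ S.filter (fun x => ¬ repCount A B x = 1), 2 := by
            simp [mul_comm]
        _ ≤ _ := Finset.sum_le_sum (fun x hx => by
            have hx' := Finset.mem_filter.mp hx
            have := repCount_pos (A := A) (B := B) hx'.1
            omega)
    omega
  have hR : (A.card : ℝ) * B.card ≥ 2 * n - u := by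
    have hcast : ((u : ℝ) + 2 * ((S.filter fun x => ¬ repCount A B x = 1).card : ℝ))
        ≤ (A.card : ℝ) * B.card := by exact_mod_cast hsum
    have hcast2 : (u : ℝ) + ((S.filter fun x => ¬ repCount A B x = 1).card : ℝ) = n := by
      exact_mod_cast hsplit
    linarith
  have hle : (2 : ℝ) ^ (1 - τ) ≤ 2 - τ := two_rpow_le τ hτ0 hτ1
  have hn0 : (0 : ℝ) ≤ n := Nat.cast_nonneg n
  calc (2 : ℝ) ^ (1 - τ) * n ≤ (2 - τ) * n := by
        exact mul_le_mul_of_nonneg_right hle hn0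
    _ = 2 * n - u := by rw [hτ]; ring
    _ ≤ (A.card : ℝ) * B.card := hR
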